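/- A finite group G is an elementary abelian 3-group if and only if the following three conditions hold: (1) for each maximal subgroup M of G, the two non-trivial cosets of M are maximal sum-free sets in G; (2) every maximal sum-free set in G is a non-trivial coset of some maximal subgroup of G; and (3) the Frattini subgroup of G is trivial. -/

import Mathlib

open Pointwise

/-- A subset `S` of a group is sum-free if for all `s₁, s₂ ∈ S`, `s₁ * s₂ ∉ S`. -/
def SumFree {G : Type*} [Group G] (S : Set G) : Prop :=
  ∀ a ∈ S, ∀ b ∈ S, a * b ∉ S

/-- A maximal sum-free set: a (nonempty) sum-free set of maximum cardinality
among all sum-free subsets. -/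
def IsMaxSumFree {G : Type*} [Group G] (S : Set G) : Prop :=
  S.Nonempty ∧ SumFree S ∧ ∀ T : Set G, SumFree T → T.ncard ≤ S.ncard

namespace ElemAb3Aux

variable {G : Type*} [Group G]

lemma one_not_mem_of_sumFree {S : Set G} (h : SumFree S) : (1:G) ∉ S :=
  fun h1 => h 1 h1 1 h1 (by simpa using h1)

lemma sumFree_coset {M : Subgroup G} {x : G} (hx : x ∉ M) : SumFree (x • (M : Set G)) := by
  rintro a ⟨m, hm, rfl⟩ b ⟨m', hm', rfl⟩ ⟨m'', hm'', h⟩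
  simp only [smul_eq_mul] at h
  apply hx
  rw [mul_assoc] at h
  have hx' : m'' = m * (x * m') := mul_left_cancel h
  have : x = m⁻¹ * m'' * m'⁻¹ := by rw [hx']; group
  rw [this]
  exact M.mul_mem (M.mul_mem (M.inv_mem hm) hm'') (M.inv_mem hm')

lemma mul_self_eq_inv {g : G} (h : g ^ 3 = 1) : g * g = g⁻¹ := by
  have h3 : g * g * g = 1 := by
    have := h; rw [pow_succ, pow_two] at this; exact this
  exact eq_inv_of_mul_eq_one_left h3

lemma inv_mul_inv_self {g : G} (h : g ^ 3 = 1) : g⁻¹ * g⁻¹ = g := by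
  have := mul_self_eq_inv h
  calc g⁻¹ * g⁻¹ = (g * g)⁻¹ := by rw [mul_inv_rev]
    _ = (g⁻¹)⁻¹ := by rw [this]
    _ = g := inv_inv g

/-- The three translates `S`, `b • S`, `b⁻¹ • S` are pairwise disjoint for `b ∈ S`. -/
lemma triple_disjoint (hcube : ∀ g : G, g ^ 3 = 1) {S : Set G} (hsf : SumFree S)
    {b : G} (hb : b ∈ S) :
    Disjoint S (b • S) ∧ Disjoint S (b⁻¹ • S) ∧ Disjoint (b • S) (b⁻¹ • S) := by
  refine ⟨Set.disjoint_left.2 ?_, Set.disjoint_left.2 ?_, Set.disjoint_left.2 ?_⟩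
  · rintro x hx ⟨s, hs, rfl⟩
    exact hsf b hb s hs hx
  · rintro x hx ⟨s, hs, hsx⟩
    have : b * x = s := by rw [← hsx]; simp [smul_eq_mul]
    exact hsf b hb x hx (this ▸ hs)
  · rintro x ⟨s, hs, rfl⟩ ⟨t, ht, hxt⟩
    -- b • s = b⁻¹ • t, so s = b⁻¹ * (b⁻¹ * t) = b * t
    have h1 : s = b⁻¹ * (b⁻¹ * t) := by
      simp only [smul_eq_mul] at hxt
      rw [hxt]; group
    have h2 : s = b * t := by
      rw [h1, ← mul_assoc, inv_mul_inv_self (hcube b)]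
    exact hsf b hb t ht (h2 ▸ hs)

variable [Finite G]

lemma ncard_smul_coset (x : G) (M : Subgroup G) :
    (x • (M : Set G)).ncard = Nat.card M := by
  rw [Set.ncard_smul_set, ← Nat.card_coe_set_eq]
  rfl

lemma third_bound (hcube : ∀ g : G, g ^ 3 = 1) {S : Set G} (hS : SumFree S) :
    3 * S.ncard ≤ Nat.card G := by
  rcases S.eq_empty_or_nonempty with rfl | ⟨a, ha⟩
  · simp
  obtain ⟨d1, d2, d3⟩ := triple_disjoint hcube hS ha
  have hcard : (S ∪ a • S ∪ a⁻¹ • S).ncard = 3 * S.ncard := by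
    rw [Set.ncard_union_eq (by exact Disjoint.union_left d2 d3)
      (Set.toFinite _) (Set.toFinite _),
      Set.ncard_union_eq d1 (Set.toFinite _) (Set.toFinite _),
      Set.ncard_smul_set, Set.ncard_smul_set]
    ring
  calc 3 * S.ncard = (S ∪ a • S ∪ a⁻¹ • S).ncard := hcard.symm
    _ ≤ (Set.univ : Set G).ncard := Set.ncard_le_ncard (Set.subset_univ _) Set.finite_univ
    _ = Nat.card G := Set.ncard_univ G

lemma index_of_coatom (hcomm : ∀ a b : G, a * b = b * a) (hcube : ∀ g : G, g ^ 3 = 1)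
    {M : Subgroup G} (hM : IsCoatom M) : M.index = 3 := by
  haveI : M.Normal := ⟨fun n hn g => by
    rw [hcomm g n, mul_assoc, mul_inv_cancel, mul_one]; exact hn⟩
  obtain ⟨x, hx⟩ : ∃ x : G, x ∉ M := by
    by_contra h
    push_neg at h
    exact hM.1 ((Subgroup.eq_top_iff' M).2 h)
  set y : G ⧸ M := (x : G ⧸ M) with hy
  have hy1 : y ≠ 1 := by
    simpa [hy, QuotientGroup.eq_one_iff] using hx
  have hy3 : y ^ 3 = 1 := by
    rw [hy, ← QuotientGroup.mk_pow, hcube x, QuotientGroup.mk_one]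
  have horder : orderOf y = 3 := by
    have hdvd : orderOf y ∣ 3 := orderOf_dvd_of_pow_eq_one hy3
    rcases (Nat.prime_three).eq_one_or_self_of_dvd _ hdvd with h | h
    · exact absurd (orderOf_eq_one_iff.mp h) hy1
    · exact h
  have htop : Subgroup.zpowers y = ⊤ := by
    have h1 : M ≤ Subgroup.comap (QuotientGroup.mk' M) (Subgroup.zpowers y) := by
      intro m hm
      simp only [Subgroup.mem_comap]
      have : (QuotientGroup.mk' M) m = 1 := (QuotientGroup.eq_one_iff m).2 hm
      rw [this]; exact Subgroup.one_mem _
    have hne : M ≠ Subgroup.comap (QuotientGroup.mk' M) (Subgroup.zpowers y) := by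
      intro hEq
      apply hx
      have : x ∈ Subgroup.comap (QuotientGroup.mk' M) (Subgroup.zpowers y) := by
        simp only [Subgroup.mem_comap]
        exact Subgroup.mem_zpowers _
      rwa [← hEq] at this
    have h2 := hM.2 _ (lt_of_le_of_ne h1 hne)
    have := congrArg (Subgroup.map (QuotientGroup.mk' M)) h2
    rwa [Subgroup.map_comap_eq_self_of_surjective (QuotientGroup.mk'_surjective M),
      Subgroup.map_top_of_surjective _ (QuotientGroup.mk'_surjective M)] at this
  rw [Subgroup.index_eq_card, ← horder, ← Nat.card_zpowers, htop]
  exact (Nat.card_congr Subgroup.topEquiv.toEquiv).symm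

lemma coatom_of_index_prime {M : Subgroup G} {p : ℕ} (hp : p.Prime) (h : M.index = p) :
    IsCoatom M := by
  constructor
  · intro htop
    rw [htop, Subgroup.index_top] at h
    exact hp.ne_one h.symm
  · intro K hK
    have hle := hK.le
    have hdvd : K.index ∣ p := h ▸ Subgroup.index_dvd_of_le hle
    rcases hp.eq_one_or_self_of_dvd _ hdvd with h1 | hp'
    · exact Subgroup.index_eq_one.mp h1
    · exfalso
      have hrm := Subgroup.relIndex_mul_index hle
      rw [hp', h] at hrm
      have hrel : M.relIndex K = 1 := Nat.eq_of_mul_eq_mul_right hp.pos (by rw [hrm, one_mul])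
      exact absurd (Subgroup.relIndex_eq_one.mp hrel) (not_le_of_gt hK)

/-- Decomposition of elements of `K ⊔ zpowers y` in a "commutative" group. -/
lemma sup_zpowers_decomp (hcomm : ∀ a b : G, a * b = b * a) {K : Subgroup G} {y : G}
    (hy : y ^ 3 = 1) {g : G} (hg : g ∈ K ⊔ Subgroup.zpowers y) :
    ∃ k ∈ K, g = k ∨ g = k * y ∨ g = k * (y * y) := by
  let U : Subgroup G :=
    { carrier := {g | ∃ k ∈ K, ∃ n : ℕ, g = k * y ^ n}
      one_mem' := ⟨1, K.one_mem, 0, by simp⟩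
      mul_mem' := by
        rintro a b ⟨k, hk, n, rfl⟩ ⟨k', hk', m, rfl⟩
        refine ⟨k * k', K.mul_mem hk hk', n + m, ?_⟩
        rw [pow_add]
        calc k * y ^ n * (k' * y ^ m) = k * (y ^ n * k') * y ^ m := by group
          _ = k * (k' * y ^ n) * y ^ m := by rw [hcomm (y ^ n) k']
          _ = k * k' * (y ^ n * y ^ m) := by group
      inv_mem' := by
        rintro a ⟨k, hk, n, rfl⟩
        refine ⟨k⁻¹, K.inv_mem hk, 2 * n, ?_⟩
        have hyn : (y ^ n)⁻¹ = y ^ (2 * n) := by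
          apply inv_eq_of_mul_eq_one_right
          calc y ^ n * y ^ (2 * n) = y ^ (n + 2 * n) := by rw [pow_add]
            _ = (y ^ 3) ^ n := by rw [← pow_mul]; ring_nf
            _ = 1 := by rw [hy, one_pow]
        rw [mul_inv_rev, hyn, hcomm] }
  have hsub : K ⊔ Subgroup.zpowers y ≤ U := by
    refine sup_le (fun k hk => ⟨k, hk, 0, by simp⟩) ?_
    exact Subgroup.zpowers_le.2 ⟨1, K.one_mem, 1, by simp⟩
  obtain ⟨k, hk, n, rfl⟩ := hsub hg
  have hmod : y ^ n = y ^ (n % 3) := pow_eq_pow_mod n hy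
  have h3 : n % 3 < 3 := Nat.mod_lt _ (by norm_num)
  refine ⟨k, hk, ?_⟩
  have hcase : n % 3 = 0 ∨ n % 3 = 1 ∨ n % 3 = 2 := by omega
  rcases hcase with h | h | h
  · left; rw [hmod, h, pow_zero, mul_one]
  · right; left; rw [hmod, h, pow_one]
  · right; right; rw [hmod, h, pow_two]

lemma exists_coatom_not_mem (hcomm : ∀ a b : G, a * b = b * a) (hcube : ∀ g : G, g ^ 3 = 1)
    {g : G} (hg : g ≠ 1) : ∃ K : Subgroup G, IsCoatom K ∧ g ∉ K := by
  have hgbot : g ∉ (⊥ : Subgroup G) := by simpa [Subgroup.mem_bot] using hg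
  obtain ⟨K, hKs, hmax⟩ : ∃ K ∈ {K : Subgroup G | g ∉ K},
      ∀ K' ∈ {K : Subgroup G | g ∉ K}, id K ≤ id K' → id K = id K' := by
    obtain ⟨K, hK1, hK2⟩ := Set.Finite.exists_maximalFor id {K : Subgroup G | g ∉ K}
      (Set.toFinite _) ⟨⊥, hgbot⟩
    exact ⟨K, hK1, fun K' hK' hle => le_antisymm hle (hK2 hK' hle)⟩
  simp only [Set.mem_setOf_eq, id] at hKs hmax
  have hsup : K ⊔ Subgroup.zpowers g = ⊤ := by
    by_contra hne
    obtain ⟨y, hy⟩ : ∃ y : G, y ∉ K ⊔ Subgroup.zpowers g := by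
      by_contra h
      push_neg at h
      exact hne ((Subgroup.eq_top_iff' _).2 h)
    have hyK : y ∉ K := fun h => hy (Subgroup.mem_sup_left h)
    have hgK2 : g ∈ K ⊔ Subgroup.zpowers y := by
      by_contra hgn
      have := hmax (K ⊔ Subgroup.zpowers y) hgn le_sup_left
      exact hyK (this ▸ Subgroup.mem_sup_right (Subgroup.mem_zpowers y))
    obtain ⟨k, hk, hcase⟩ := sup_zpowers_decomp hcomm (hcube y) hgK2
    rcases hcase with rfl | h1 | h2
    · exact hKs hk
    · apply hy
      have : y = k⁻¹ * g := by rw [h1]; group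
      rw [this]
      exact Subgroup.mul_mem _ (Subgroup.mem_sup_left (K.inv_mem hk))
        (Subgroup.mem_sup_right (Subgroup.mem_zpowers g))
    · apply hy
      have hyy : y * y ∈ K ⊔ Subgroup.zpowers g := by
        have : y * y = k⁻¹ * g := by rw [h2]; group
        rw [this]
        exact Subgroup.mul_mem _ (Subgroup.mem_sup_left (K.inv_mem hk))
          (Subgroup.mem_sup_right (Subgroup.mem_zpowers g))
      have hy4 : y * y * (y * y) = y := by
        have h3 : y * y * y = 1 := by
          have := hcube y; rw [pow_succ, pow_two] at this; exact this
        calc y * y * (y * y) = y * y * y * y := by group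
          _ = 1 * y := by rw [h3]
          _ = y := one_mul y
      exact hy4 ▸ Subgroup.mul_mem _ hyy hyy
  refine ⟨K, ⟨fun h => hKs (h ▸ Subgroup.mem_top g), fun L hL => ?_⟩, hKs⟩
  have hgL : g ∈ L := by
    by_contra hgn
    exact absurd (hmax L hgn hL.le) (ne_of_lt hL)
  have : K ⊔ Subgroup.zpowers g ≤ L := sup_le hL.le (Subgroup.zpowers_le.2 hgL)
  rw [hsup] at this
  exact top_le_iff.mp this

lemma card_pos_subgroup (M : Subgroup G) : 0 < Nat.card M :=
  Nat.card_pos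

lemma forward_A (hcomm : ∀ a b : G, a * b = b * a) (hcube : ∀ g : G, g ^ 3 = 1)
    {M : Subgroup G} (hM : IsCoatom M) :
    M.index = 3 ∧ ∀ x : G, x ∉ M → IsMaxSumFree (x • (M : Set G)) := by
  have hidx := index_of_coatom hcomm hcube hM
  refine ⟨hidx, fun x hx => ⟨⟨x, 1, M.one_mem, by simp⟩, sumFree_coset hx, fun T hT => ?_⟩⟩
  have h1 : 3 * T.ncard ≤ Nat.card G := third_bound hcube hT
  have h2 : Nat.card G = 3 * Nat.card M := by
    rw [← Subgroup.index_mul_card (H := M), hidx]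
  rw [ncard_smul_coset]
  have := card_pos_subgroup M
  omega

lemma maxSumFree_is_coset (hcomm : ∀ a b : G, a * b = b * a) (hcube : ∀ g : G, g ^ 3 = 1)
    {S : Set G} (hS : IsMaxSumFree S) :
    ∃ M : Subgroup G, IsCoatom M ∧ ∃ x : G, x ∉ M ∧ S = x • (M : Set G) := by
  obtain ⟨⟨a, haS⟩, hsf, hmax⟩ := hS
  have hane : a ≠ 1 := fun h => one_not_mem_of_sumFree hsf (h ▸ haS)
  obtain ⟨M₀, hM₀, _⟩ := exists_coatom_not_mem hcomm hcube hane
  obtain ⟨x₀, hx₀⟩ : ∃ x₀ : G, x₀ ∉ M₀ := by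
    by_contra h
    push_neg at h
    exact hM₀.1 ((Subgroup.eq_top_iff' M₀).2 h)
  have hidx : M₀.index = 3 := index_of_coatom hcomm hcube hM₀
  have hcard3 : Nat.card G = 3 * Nat.card M₀ := by
    rw [← Subgroup.index_mul_card (H := M₀), hidx]
  have hge : Nat.card M₀ ≤ S.ncard := by
    have := hmax _ (sumFree_coset hx₀)
    rwa [ncard_smul_coset] at this
  have hle : 3 * S.ncard ≤ Nat.card G := third_bound hcube hsf
  have hS3 : 3 * S.ncard = Nat.card G := by omega
  -- partition property
  have hpart : ∀ b ∈ S, ∀ z : G, z ∈ S ∨ z ∈ b • S ∨ z ∈ b⁻¹ • S := by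
    intro b hb z
    obtain ⟨d1, d2, d3⟩ := triple_disjoint hcube hsf hb
    have hucard : (S ∪ b • S ∪ b⁻¹ • S).ncard = 3 * S.ncard := by
      rw [Set.ncard_union_eq (by exact Disjoint.union_left d2 d3)
        (Set.toFinite _) (Set.toFinite _),
        Set.ncard_union_eq d1 (Set.toFinite _) (Set.toFinite _),
        Set.ncard_smul_set, Set.ncard_smul_set]
      ring
    have huniv : S ∪ b • S ∪ b⁻¹ • S = Set.univ := by
      apply Set.eq_of_subset_of_ncard_le (Set.subset_univ _)
      rw [hucard, Set.ncard_univ, ← hS3]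
    have hz : z ∈ S ∪ b • S ∪ b⁻¹ • S := huniv ▸ Set.mem_univ z
    rcases hz with (hz | hz) | hz
    · exact Or.inl hz
    · exact Or.inr (Or.inl hz)
    · exact Or.inr (Or.inr hz)
  have hinv : ∀ s ∈ S, s⁻¹ ∉ S := by
    intro s hs h
    have := mul_self_eq_inv (hcube s)
    exact hsf s hs s hs (this ▸ h)
  have hdiv : ∀ s ∈ S, ∀ t ∈ S, s * t⁻¹ ∉ S := by
    intro s hs t ht h
    have heq : s * t⁻¹ * t = s := by group
    apply hsf _ h _ ht
    rw [heq]; exact hs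
  have hkey : ∀ s ∈ S, ∀ t ∈ S, s⁻¹ * t⁻¹ ∈ S := by
    intro s hs t ht
    rcases hpart s hs (s⁻¹ * t⁻¹) with h | ⟨y, hy, hy2⟩ | ⟨y, hy, hy2⟩
    · exact h
    · exfalso
      simp only [smul_eq_mul] at hy2
      have hy3 : y = s⁻¹ * (s⁻¹ * t⁻¹) := by rw [← hy2]; group
      have : y = s * t⁻¹ := by
        rw [hy3, ← mul_assoc, inv_mul_inv_self (hcube s)]
      exact hdiv s hs t ht (this ▸ hy)
    · exfalso
      simp only [smul_eq_mul] at hy2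
      have hy3 : y = s * (s⁻¹ * t⁻¹) := by
        rw [← hy2]; group
      have : y = t⁻¹ := by rw [hy3]; group
      exact hinv t ht (this ▸ hy)
  have hSS : ∀ b ∈ S, b • S = S⁻¹ := by
    intro b hb
    apply Set.eq_of_subset_of_ncard_le
    · rintro x ⟨s, hs, rfl⟩
      simp only [smul_eq_mul, Set.mem_inv]
      have : (b * s)⁻¹ = s⁻¹ * b⁻¹ := by group
      rw [this]
      exact hkey s hs b hb
    · rw [Set.ncard_inv, Set.ncard_smul_set]
    · exact Set.toFinite _
  -- the stabilizer subgroup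
  let M : Subgroup G := MulAction.stabilizer G S
  have hmemM : ∀ b ∈ S, a⁻¹ * b ∈ M := by
    intro b hb
    show (a⁻¹ * b) • S = S
    rw [mul_smul, hSS b hb, ← hSS a haS, inv_smul_smul]
  have hSeq : S = a • (M : Set G) := by
    apply Set.Subset.antisymm
    · intro s hs
      exact ⟨a⁻¹ * s, hmemM s hs, by simp [smul_eq_mul]⟩
    · rintro z ⟨m, hm, rfl⟩
      have hmS : m • S = S := hm
      have : m * a ∈ S := by
        rw [← hmS]
        exact Set.smul_mem_smul_set haS
      simpa [smul_eq_mul, hcomm a m] using this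
  have hcardS : S.ncard = Nat.card M := by
    rw [hSeq, ncard_smul_coset]
  have hidxM : M.index = 3 := by
    have h1 : Nat.card M * M.index = Nat.card G := Subgroup.card_mul_index M
    have h2 : Nat.card G = 3 * Nat.card M := by rw [← hS3, hcardS]
    have h3 : 0 < Nat.card M := card_pos_subgroup M
    have : Nat.card M * M.index = Nat.card M * 3 := by rw [h1, h2]; ring
    exact Nat.eq_of_mul_eq_mul_left h3 this
  have haM : a ∉ M := by
    intro h
    apply one_not_mem_of_sumFree hsf
    rw [hSeq]
    exact ⟨a⁻¹, M.inv_mem h, by simp⟩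
  exact ⟨M, coatom_of_index_prime (by norm_num) hidxM, a, haM, hSeq⟩

lemma forward_C (hcomm : ∀ a b : G, a * b = b * a) (hcube : ∀ g : G, g ^ 3 = 1) :
    (⨅ M ∈ {M : Subgroup G | IsCoatom M}, M) = ⊥ := by
  rw [eq_bot_iff]
  intro g hg
  simp only [Subgroup.mem_iInf, Set.mem_setOf_eq] at hg
  rw [Subgroup.mem_bot]
  by_contra hne
  obtain ⟨K, hK, hgK⟩ := exists_coatom_not_mem hcomm hcube hne
  exact hgK (hg K hK)

/-- Every coatom is normal, given that all coatoms have index 3. -/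
lemma coatom_normalCore (hidx : ∀ M : Subgroup G, IsCoatom M → M.index = 3)
    {M : Subgroup G} (hM : IsCoatom M) : M.normalCore = M := by
  classical
  haveI : Fintype (G ⧸ M) := Fintype.ofFinite _
  set φ := MulAction.toPermHom G (G ⧸ M) with hφ
  have hker : M.normalCore = φ.ker := Subgroup.normalCore_eq_ker M
  have hcQ : Nat.card (G ⧸ M) = 3 := by
    rw [← Subgroup.index_eq_card, hidx M hM]
  have hPerm : Nat.card (Equiv.Perm (G ⧸ M)) = 6 := by
    rw [Nat.card_eq_fintype_card, Fintype.card_perm, ← Nat.card_eq_fintype_card, hcQ]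
    decide
  have hdvd6 : Nat.card φ.range ∣ 6 := hPerm ▸ Subgroup.card_subgroup_dvd_card φ.range
  have h3dvd : 3 ∣ Nat.card φ.range := by
    rw [← Subgroup.index_ker, ← hker]
    exact (hidx M hM) ▸ Subgroup.index_dvd_of_le M.normalCore_le
  obtain ⟨d, hd⟩ := h3dvd
  have hd2 : d ∣ 2 := by
    have h6 : (3 : ℕ) * d ∣ 3 * 2 := by rw [← hd]; exact hdvd6
    exact (mul_dvd_mul_iff_left (by norm_num : (3:ℕ) ≠ 0)).mp h6
  rcases (Nat.prime_two).eq_one_or_self_of_dvd _ hd2 with rfl | rfl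
  · -- range has order 3, so ker = M
    have hkeridx : M.normalCore.index = 3 := by
      rw [hker, Subgroup.index_ker, hd, mul_one]
    have hrm := Subgroup.relIndex_mul_index M.normalCore_le
    rw [hkeridx, hidx M hM] at hrm
    have hrel : M.normalCore.relIndex M = 1 := by omega
    exact le_antisymm M.normalCore_le (Subgroup.relIndex_eq_one.mp hrel)
  · -- range = ⊤, build an index-2 subgroup: contradiction
    exfalso
    have hrange : φ.range = ⊤ := by
      apply Subgroup.eq_top_of_card_eq
      rw [hd, hPerm]
    have hsurj : Function.Surjective φ := MonoidHom.range_eq_top.mp hrange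
    haveI : Nontrivial (G ⧸ M) := by
      rw [← Fintype.one_lt_card_iff_nontrivial, ← Nat.card_eq_fintype_card, hcQ]
      norm_num
    set ψ := (Equiv.Perm.sign (α := G ⧸ M)).comp φ with hψ
    have hψsurj : Function.Surjective ψ :=
      (Equiv.Perm.sign_surjective (G ⧸ M)).comp hsurj
    have hψidx : ψ.ker.index = 2 := by
      rw [Subgroup.index_ker, MonoidHom.range_eq_top_of_surjective _ hψsurj]
      rw [Nat.card_congr Subgroup.topEquiv.toEquiv, Nat.card_eq_fintype_card,
        Fintype.card_units_int]
    have := hidx _ (coatom_of_index_prime Nat.prime_two hψidx)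
    omega

end ElemAb3Aux

theorem elementary_abelian_three_characterisation (G : Type*) [Group G] [Finite G] :
    ((∀ a b : G, a * b = b * a) ∧ ∀ g : G, g ≠ 1 → orderOf g = 3) ↔
      ((∀ M : Subgroup G, IsCoatom M →
          M.index = 3 ∧ ∀ x : G, x ∉ M → IsMaxSumFree (x • (M : Set G))) ∧
        (∀ S : Set G, IsMaxSumFree S →
          ∃ M : Subgroup G, IsCoatom M ∧ ∃ x : G, x ∉ M ∧ S = x • (M : Set G)) ∧
        (⨅ M ∈ {M : Subgroup G | IsCoatom M}, M) = ⊥) := by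
  constructor
  · rintro ⟨hcomm, hord⟩
    have hcube : ∀ g : G, g ^ 3 = 1 := by
      intro g
      by_cases h : g = 1
      · rw [h, one_pow]
      · rw [← hord g h]
        exact pow_orderOf_eq_one g
    exact ⟨fun M hM => ElemAb3Aux.forward_A hcomm hcube hM,
      fun S hS => ElemAb3Aux.maxSumFree_is_coset hcomm hcube hS,
      ElemAb3Aux.forward_C hcomm hcube⟩
  · rintro ⟨h1, -, h3⟩
    have hidx : ∀ M : Subgroup G, IsCoatom M → M.index = 3 := fun M hM => (h1 M hM).1
    have hin : ∀ g : G, (∀ M : Subgroup G, IsCoatom M → g ∈ M) → g = 1 := by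
      intro g hg
      have hmem : g ∈ (⨅ M ∈ {M : Subgroup G | IsCoatom M}, M) := by
        simp only [Subgroup.mem_iInf, Set.mem_setOf_eq]
        exact hg
      rw [h3] at hmem
      simpa [Subgroup.mem_bot] using hmem
    have hnormal : ∀ M : Subgroup G, IsCoatom M → M.Normal := by
      intro M hM
      rw [← ElemAb3Aux.coatom_normalCore hidx hM]
      exact M.normalCore_normal
    haveI : Fact (Nat.Prime 3) := ⟨by norm_num⟩
    constructor
    · intro a b
      have key : ∀ M : Subgroup G, IsCoatom M → a * b * (b * a)⁻¹ ∈ M := by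
        intro M hM
        haveI := hnormal M hM
        have hc : Nat.card (G ⧸ M) = 3 := by
          rw [← Subgroup.index_eq_card, hidx M hM]
        haveI : IsCyclic (G ⧸ M) := isCyclic_of_prime_card hc
        obtain ⟨q, hq⟩ := IsCyclic.exists_generator (α := G ⧸ M)
        obtain ⟨i, hi⟩ := hq ((a : G) : G ⧸ M)
        obtain ⟨j, hj⟩ := hq ((b : G) : G ⧸ M)
        have hmk : ((a * b : G) : G ⧸ M) = ((b * a : G) : G ⧸ M) := by
          rw [QuotientGroup.mk_mul, QuotientGroup.mk_mul, ← hi, ← hj, ← zpow_add,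
            ← zpow_add, add_comm]
        have hone : ((a * b * (b * a)⁻¹ : G) : G ⧸ M) = 1 := by
          rw [QuotientGroup.mk_mul, QuotientGroup.mk_inv, hmk, mul_inv_cancel]
        exact (QuotientGroup.eq_one_iff _).mp hone
      exact mul_inv_eq_one.mp (hin _ key)
    · intro g hg
      have key : ∀ M : Subgroup G, IsCoatom M → g ^ 3 ∈ M := by
        intro M hM
        haveI := hnormal M hM
        have hc : Nat.card (G ⧸ M) = 3 := by
          rw [← Subgroup.index_eq_card, hidx M hM]
        have hone : ((g ^ 3 : G) : G ⧸ M) = 1 := by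
          rw [QuotientGroup.mk_pow, ← hc]
          exact pow_card_eq_one'
        exact (QuotientGroup.eq_one_iff _).mp hone
      have h3g : g ^ 3 = 1 := hin _ key
      rcases Nat.prime_three.eq_one_or_self_of_dvd _ (orderOf_dvd_of_pow_eq_one h3g) with h | h
      · exact absurd (orderOf_eq_one_iff.mp h) hg
      · exact h
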